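/- Let G be a finite tree on at least two vertices with normalized Laplacian 𝓛, and suppose there is perfect state transfer between vertices a and b lying in different bipartite classes (i.e., the graph distance between a and b is odd). If the negative eigenvalue support of a and b is S⁻ = {2}, then G is the path on two vertices, i.e., G has exactly two vertices a and b joined by an edge. -/

import Mathlib

open Matrix
open scoped Nat

/-- The normalized Laplacian `𝓛 = D^{-1/2}(D − A)D^{-1/2}` of a simple graph. -/
noncomputable def normLap {V : Type*} [Fintype V] [DecidableEq V]
    (G : SimpleGraph V) [DecidableRel G.Adj] : Matrix V V ℝ :=
  Matrix.diagonal (fun v => (Real.sqrt (G.degree v))⁻¹) *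
    (Matrix.diagonal (fun v => (G.degree v : ℝ)) - G.adjMatrix ℝ) *
    Matrix.diagonal (fun v => (Real.sqrt (G.degree v))⁻¹)

/-- The quantum walk transition matrix `U(t) = exp(i t 𝓛)`. -/
noncomputable def qwalk {V : Type*} [Fintype V] [DecidableEq V]
    (G : SimpleGraph V) [DecidableRel G.Adj] (t : ℝ) : Matrix V V ℂ :=
  NormedSpace.exp ((Complex.I * (t : ℂ)) • (normLap G).map Complex.ofReal)

/-- `θ` lies in the eigenvalue support of vertex `a` for the symmetric matrix `L`:
some eigenvector of `L` for `θ` has nonzero entry at `a`. -/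
def inSupport {V : Type*} [Fintype V] (L : Matrix V V ℝ) (a : V) (θ : ℝ) : Prop :=
  ∃ v : V → ℝ, v ≠ 0 ∧ L.mulVec v = θ • v ∧ v a ≠ 0

/-- Vertices `a` and `b` are strongly cospectral with respect to `L`. -/
def StronglyCospectral {V : Type*} [Fintype V] (L : Matrix V V ℝ) (a b : V) : Prop :=
  ∀ θ : ℝ, (∀ v : V → ℝ, L.mulVec v = θ • v → v a = v b) ∨
           (∀ v : V → ℝ, L.mulVec v = θ • v → v a = - v b)

/-- `θ` is in the positive eigenvalue support `S⁺` of strongly cospectral vertices `a, b`. -/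
def Splus {V : Type*} [Fintype V] (L : Matrix V V ℝ) (a b : V) (θ : ℝ) : Prop :=
  inSupport L a θ ∧ ∀ v : V → ℝ, L.mulVec v = θ • v → v a = v b

/-- `θ` is in the negative eigenvalue support `S⁻` of strongly cospectral vertices `a, b`. -/
def Sminus {V : Type*} [Fintype V] (L : Matrix V V ℝ) (a b : V) (θ : ℝ) : Prop :=
  inSupport L a θ ∧ ∀ v : V → ℝ, L.mulVec v = θ • v → v a = - v b

/-- Perfect state transfer from `a` to `b` at time `τ`. -/
noncomputable def PST {V : Type*} [Fintype V] [DecidableEq V]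
    (G : SimpleGraph V) [DecidableRel G.Adj] (a b : V) (τ : ℝ) : Prop :=
  ∃ γ : ℂ, ‖γ‖ = 1 ∧ (qwalk G τ).mulVec (Pi.single a 1) = γ • (Pi.single b 1 : V → ℂ)

/-- `m`: the lcm of the denominators of a finite set of rationals. -/
def mOf (T : Finset ℚ) : ℕ := T.lcm fun q => q.den

/-- `g`: the gcd of the integers `m·θ` for `θ ∈ T`. -/
def gOf (T : Finset ℚ) : ℤ := T.gcd fun q => ((mOf T : ℚ) * q).num

/-! ### Auxiliary lemmas -/

section Aux

lemma exp_mulVec_eigen {n : Type*} [Fintype n] [DecidableEq n]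
    (M : Matrix n n ℂ) (v : n → ℂ) (c : ℂ) (h : M.mulVec v = c • v) :
    (NormedSpace.exp M).mulVec v = Complex.exp c • v := by
  letI : SeminormedRing (Matrix n n ℂ) := Matrix.linftyOpSemiNormedRing
  letI : NormedRing (Matrix n n ℂ) := Matrix.linftyOpNormedRing
  letI : NormedAlgebra ℂ (Matrix n n ℂ) := Matrix.linftyOpNormedAlgebra
  have hpow : ∀ k : ℕ, (M ^ k).mulVec v = c ^ k • v := by
    intro k
    induction k with
    | zero => simp [Matrix.one_mulVec]
    | succ k ih =>
      rw [pow_succ, ← Matrix.mulVec_mulVec, h, Matrix.mulVec_smul, ih, pow_succ]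
      rw [smul_smul, mul_comm]
  let f : Matrix n n ℂ →ₗ[ℂ] (n → ℂ) :=
    { toFun := fun A => A.mulVec v
      map_add' := fun A B => Matrix.add_mulVec A B v
      map_smul' := fun r A => by simp [Matrix.smul_mulVec] }
  have hsum : Summable fun k : ℕ => ((k ! : ℂ)⁻¹) • M ^ k :=
    NormedSpace.expSeries_summable' (𝕂 := ℂ) M
  have he := NormedSpace.exp_eq_tsum (𝕂 := ℂ) (𝔸 := Matrix n n ℂ)
  calc (NormedSpace.exp M).mulVec v
      = f (∑' k : ℕ, ((k ! : ℂ)⁻¹) • M ^ k) := by rw [he]; rfl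
    _ = ∑' k : ℕ, f (((k ! : ℂ)⁻¹) • M ^ k) := by
        exact (hsum.hasSum.map f.toContinuousLinearMap
          f.toContinuousLinearMap.continuous).tsum_eq.symm
    _ = ∑' k : ℕ, (((k ! : ℂ)⁻¹) * c ^ k) • v := by
        congr 1; funext k
        simp only [f, LinearMap.coe_mk, AddHom.coe_mk, Matrix.smul_mulVec, hpow, smul_smul]
    _ = (∑' k : ℕ, ((k ! : ℂ)⁻¹) * c ^ k) • v := by
        rw [Summable.tsum_smul_const]
        exact NormedSpace.expSeries_summable' (𝕂 := ℂ) c |>.congr (fun k => by simp [smul_eq_mul])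
    _ = Complex.exp c • v := by
        congr 1
        rw [Complex.exp_eq_exp_ℂ, NormedSpace.exp_eq_tsum ℂ]
        simp [smul_eq_mul]

variable {V : Type*} [Fintype V] [DecidableEq V]

lemma pst_key (L : Matrix V V ℝ) (hL : Lᵀ = L) (τ : ℝ) (γ : ℂ) (a b : V)
    (hU : (NormedSpace.exp ((Complex.I * (τ : ℂ)) • L.map Complex.ofReal)).mulVec
        (Pi.single a 1) = γ • (Pi.single b 1 : V → ℂ))
    (θ : ℝ) (v : V → ℝ) (hv : L.mulVec v = θ • v) :
    Complex.exp (Complex.I * τ * θ) * (v a : ℂ) = γ * (v b : ℂ) := by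
  set M : Matrix V V ℂ := (Complex.I * (τ : ℂ)) • L.map Complex.ofReal with hM
  set v' : V → ℂ := fun x => (v x : ℂ) with hv'
  have hmap : (L.map Complex.ofReal).mulVec v' = fun x => ((L.mulVec v x : ℝ) : ℂ) := by
    funext x
    simp only [Matrix.mulVec, dotProduct, Matrix.map_apply, hv']
    push_cast
    rfl
  have heig : M.mulVec v' = (Complex.I * τ * θ) • v' := by
    rw [hM, Matrix.smul_mulVec, hmap]
    funext x
    simp only [Pi.smul_apply, smul_eq_mul, hv']
    rw [congrFun hv x]
    simp only [Pi.smul_apply, smul_eq_mul]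
    push_cast
    ring
  have hexp := exp_mulVec_eigen M v' _ heig
  have hMsymm : Mᵀ = M := by
    rw [hM, Matrix.transpose_smul, ← Matrix.transpose_map, hL]
  have hUsymm : (NormedSpace.exp M)ᵀ = NormedSpace.exp M := by
    rw [← Matrix.exp_transpose, hMsymm]
  have key := congrArg (fun w => dotProduct v' w) hU
  rw [dotProduct_mulVec] at key
  have hvm : Matrix.vecMul v' (NormedSpace.exp M) = (NormedSpace.exp M).mulVec v' := by
    rw [← hUsymm, Matrix.vecMul_transpose, hUsymm]
  rw [hvm, hexp] at key
  rw [dotProduct_smul, smul_dotProduct] at key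
  rw [dotProduct_single, dotProduct_single] at key
  simpa [hv', smul_eq_mul] using key

variable (G : SimpleGraph V) [DecidableRel G.Adj]

lemma normLap_mulVec (hdeg : ∀ x, 0 < G.degree x) (v : V → ℝ) (x : V) :
    (normLap G).mulVec v x = v x - (Real.sqrt (G.degree x))⁻¹ *
      ∑ y ∈ G.neighborFinset x, (Real.sqrt (G.degree y))⁻¹ * v y := by
  have hs : ∀ z : V, (0:ℝ) < Real.sqrt (G.degree z) := fun z =>
    Real.sqrt_pos.2 (by exact_mod_cast hdeg z)
  simp only [normLap, ← Matrix.mulVec_mulVec]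
  rw [Matrix.mulVec_diagonal]
  have h1 : ((diagonal (fun v => ((G.degree v : ℝ)))
      - SimpleGraph.adjMatrix ℝ G) *ᵥ ((diagonal fun v => (Real.sqrt (G.degree v))⁻¹) *ᵥ v)) x
      = (G.degree x : ℝ) * ((Real.sqrt (G.degree x))⁻¹ * v x)
        - ∑ y ∈ G.neighborFinset x, (Real.sqrt (G.degree y))⁻¹ * v y := by
    rw [Matrix.sub_mulVec]
    simp only [Pi.sub_apply, Matrix.mulVec_diagonal, SimpleGraph.adjMatrix_mulVec_apply]
  rw [h1, mul_sub]
  congr 1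
  have hsq : Real.sqrt (G.degree x) * Real.sqrt (G.degree x) = (G.degree x : ℝ) :=
    Real.mul_self_sqrt (by positivity)
  field_simp
  ring_nf
  rw [mul_comm ((G.degree x : ℝ)) (v x), mul_assoc,
    inv_pow, sq, hsq, mul_inv_cancel₀ (by exact_mod_cast (hdeg x).ne' : (G.degree x : ℝ) ≠ 0), mul_one]

lemma normLap_isHermitian : (normLap G).IsHermitian := by
  unfold normLap
  show _ᴴ = _
  rw [conjTranspose_eq_transpose_of_trivial, transpose_mul, transpose_mul,
    Matrix.diagonal_transpose, transpose_sub, Matrix.diagonal_transpose,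
    SimpleGraph.transpose_adjMatrix, Matrix.mul_assoc]

lemma normLap_ker (hdeg : ∀ x, 0 < G.degree x) (hconn : G.Connected)
    (v : V → ℝ) (hv : (normLap G).mulVec v = 0) :
    ∃ c : ℝ, ∀ x, v x = c * Real.sqrt (G.degree x) := by
  have hmv := normLap_mulVec G hdeg
  have hs : ∀ z : V, (0:ℝ) < Real.sqrt (G.degree z) := fun z =>
    Real.sqrt_pos.2 (by exact_mod_cast hdeg z)
  set w : V → ℝ := fun x => (Real.sqrt (G.degree x))⁻¹ * v x with hw
  have hlap : G.lapMatrix ℝ *ᵥ w = 0 := by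
    funext x
    rw [SimpleGraph.lapMatrix_mulVec_apply]
    have h0 := congrFun hv x
    rw [hmv v x] at h0
    simp only [Pi.zero_apply] at h0
    have h1 : v x = (Real.sqrt (G.degree x))⁻¹ * ∑ y ∈ G.neighborFinset x, w y := by
      rw [← sub_eq_zero]; exact h0
    have hsq : Real.sqrt (G.degree x) * Real.sqrt (G.degree x) = (G.degree x : ℝ) :=
      Real.mul_self_sqrt (by positivity)
    have : (G.degree x : ℝ) * w x = ∑ y ∈ G.neighborFinset x, w y := by
      show (G.degree x : ℝ) * ((Real.sqrt (G.degree x))⁻¹ * v x) = _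
      rw [h1, ← hsq]
      field_simp
      rw [Real.sqrt_sq (hs x).le, mul_div_cancel_left₀ _ (pow_ne_zero 2 (hs x).ne')]
    simp only [Pi.zero_apply]
    rw [this]
    ring
  have := (SimpleGraph.lapMatrix_mulVec_eq_zero_iff_forall_reachable G (x := w)).1 ?_
  · obtain ⟨x0⟩ := hconn.nonempty
    refine ⟨w x0, fun x => ?_⟩
    have hx : w x = w x0 := this x x0 (hconn.preconnected x x0)
    have : v x = w x * Real.sqrt (G.degree x) := by
      show v x = (Real.sqrt (G.degree x))⁻¹ * v x * Real.sqrt (G.degree x)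
      rw [mul_comm, ← mul_assoc, mul_inv_cancel₀ (hs x).ne', one_mul]
    rw [this, hx]
  · exact hlap

lemma conj_eigen (L : Matrix V V ℝ)
    (hmv : ∀ (v : V → ℝ) (x : V), L.mulVec v x = v x - (Real.sqrt (G.degree x))⁻¹ *
      ∑ y ∈ G.neighborFinset x, (Real.sqrt (G.degree y))⁻¹ * v y)
    (σ : V → ℝ) (hσadj : ∀ x y, G.Adj x y → σ y = -σ x)
    (v : V → ℝ) (θ : ℝ) (hv : L.mulVec v = θ • v) :
    L.mulVec (σ * v) = (2 - θ) • (σ * v) := by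
  funext x
  have h0 := congrFun hv x
  rw [hmv v x] at h0
  simp only [Pi.smul_apply, smul_eq_mul] at h0
  rw [hmv (σ * v) x]
  have hsum : ∑ y ∈ G.neighborFinset x, (Real.sqrt (G.degree y))⁻¹ * (σ * v) y
      = -σ x * ∑ y ∈ G.neighborFinset x, (Real.sqrt (G.degree y))⁻¹ * v y := by
    rw [Finset.mul_sum]
    refine Finset.sum_congr rfl fun y hy => ?_
    rw [SimpleGraph.mem_neighborFinset] at hy
    simp only [Pi.mul_apply]
    rw [hσadj x y hy]
    ring
  rw [hsum]
  simp only [Pi.smul_apply, Pi.mul_apply, smul_eq_mul]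
  have : (Real.sqrt (G.degree x))⁻¹ * ∑ y ∈ G.neighborFinset x, (Real.sqrt (G.degree y))⁻¹ * v y
      = v x - θ * v x := by linarith
  rw [mul_left_comm, this]; ring

end Aux

section Tree

variable {V : Type*} [DecidableEq V] {G : SimpleGraph V}

lemma concat_isPath {x y : V} {p : G.Walk x y} {z : V} (hp : p.IsPath) (h : G.Adj y z)
    (hz : z ∉ p.support) : (p.concat h).IsPath := by
  rw [← SimpleGraph.Walk.isPath_reverse_iff, SimpleGraph.Walk.reverse_concat]
  exact hp.reverse.cons (by simpa [SimpleGraph.Walk.support_reverse] using hz)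

lemma tree_level (hG : G.IsTree) (a : V) :
    ∃ f : V → ℕ, f a = 0 ∧ (∀ x, f x = G.dist a x) ∧
      (∀ x y, G.Adj x y → f x + 1 = f y ∨ f y + 1 = f x) := by
  have hpath := hG.existsUnique_path
  choose p hp hup using fun x => hpath a x
  refine ⟨fun x => (p x).length, ?_, ?_, ?_⟩
  · show (p a).length = 0
    rw [← hup a SimpleGraph.Walk.nil (by simp)]
    rfl
  · intro x
    show (p x).length = G.dist a x
    have h1 : G.dist a x ≤ (p x).length := SimpleGraph.dist_le (p x)
    have hr : G.Reachable a x := ⟨p x⟩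
    obtain ⟨w, hw⟩ := hr.exists_walk_length_eq_dist
    have hb : w.bypass = p x := hup x w.bypass w.bypass_isPath
    have h2 : (p x).length ≤ G.dist a x := by
      rw [← hb, ← hw]; exact SimpleGraph.Walk.length_bypass_le w
    omega
  · intro x y hxy
    show (p x).length + 1 = (p y).length ∨ (p y).length + 1 = (p x).length
    by_cases hy : y ∈ (p x).support
    · have h1 : p y = (p x).takeUntil y hy := (hup y _ ((hp x).takeUntil hy)).symm
      by_cases hx : x ∈ (p y).support
      · exfalso
        have h2 : p x = (p y).takeUntil x hx := (hup x _ ((hp y).takeUntil hx)).symm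
        have l1 : (p y).length ≤ (p x).length := by
          conv_lhs => rw [h1]
          exact SimpleGraph.Walk.length_takeUntil_le _ hy
        have l2 : (p x).length ≤ (p y).length := by
          conv_lhs => rw [h2]
          exact SimpleGraph.Walk.length_takeUntil_le _ hx
        have hspec := ((p x).take_spec hy)
        have hlen : ((p x).takeUntil y hy).length + ((p x).dropUntil y hy).length
            = (p x).length := by
          conv_rhs => rw [← hspec]
          rw [SimpleGraph.Walk.length_append]
        rw [← h1] at hlen
        have : ((p x).dropUntil y hy).length = 0 := by omega
        exact hxy.ne' (SimpleGraph.Walk.eq_of_length_eq_zero this)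
      · right
        have hconcat : ((p y).concat hxy.symm).IsPath := concat_isPath (hp y) hxy.symm hx
        rw [← hup x _ hconcat, SimpleGraph.Walk.length_concat]
    · left
      have hconcat : ((p x).concat hxy).IsPath := concat_isPath (hp x) hxy hy
      rw [← hup y _ hconcat, SimpleGraph.Walk.length_concat]

end Tree

/-- if a tree admits perfect state transfer between vertices in different
bipartite classes and `S⁻ = {2}`, then the tree is the path on two vertices. -/

theorem tree_pst_diff_class_Sminus_two {V : Type*} [Fintype V] [DecidableEq V]
    (G : SimpleGraph V) [DecidableRel G.Adj]
    (hG : G.IsTree) (hcard : 2 ≤ Fintype.card V)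
    (a b : V) (hab : a ≠ b)
    (hpst : ∃ τ : ℝ, 0 < τ ∧ PST G a b τ)
    (hclass : Odd (G.dist a b))
    (hS : ∀ θ : ℝ, Sminus (normLap G) a b θ ↔ θ = 2) :
    Fintype.card V = 2 ∧ G.Adj a b := by
  classical
  obtain ⟨τ, hτ, γ, hγ, hU⟩ := hpst
  have hconn : G.Connected := hG.isConnected
  have hdeg : ∀ x, 0 < G.degree x := by
    intro x
    rw [G.degree_pos_iff_exists_adj]
    obtain ⟨y, hy⟩ := Fintype.exists_ne_of_one_lt_card (by omega) x
    obtain ⟨w⟩ := hconn.preconnected x y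
    cases w with
    | nil => exact absurd rfl hy.symm
    | cons h p => exact ⟨_, h⟩
  have hs : ∀ z : V, (0:ℝ) < Real.sqrt (G.degree z) := fun z =>
    Real.sqrt_pos.2 (by exact_mod_cast hdeg z)
  have hmv := normLap_mulVec G hdeg
  -- the bipartition sign function
  obtain ⟨f, hfa, hfd, hfadj⟩ := tree_level hG a
  set σ : V → ℝ := fun x => (-1 : ℝ) ^ (f x) with hσ
  have hσval : ∀ x, σ x = 1 ∨ σ x = -1 := by
    intro x
    rcases Nat.even_or_odd (f x) with h | h
    · exact Or.inl (h.neg_one_pow)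
    · exact Or.inr (h.neg_one_pow)
  have hσa : σ a = 1 := by rw [hσ]; simp [hfa]
  have hσb : σ b = -1 := by
    have hodd : Odd (f b) := by rw [hfd b]; exact hclass
    rw [hσ]; exact hodd.neg_one_pow
  have hσadj : ∀ x y, G.Adj x y → σ y = -σ x := by
    intro x y hxy
    rcases hfadj x y hxy with h | h
    · show (-1 : ℝ) ^ (f y) = -(-1 : ℝ) ^ (f x)
      rw [← h, pow_succ]; ring
    · show (-1 : ℝ) ^ (f y) = -(-1 : ℝ) ^ (f x)
      rw [← h, pow_succ]; ring
  have hσsq : ∀ x, σ x * σ x = 1 := by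
    intro x; rcases hσval x with h | h <;> rw [h] <;> norm_num
  -- PST key relation
  have hL : (normLap G)ᵀ = normLap G := by
    have := normLap_isHermitian G
    rwa [Matrix.IsHermitian, conjTranspose_eq_transpose_of_trivial] at this
  have hkey : ∀ (θ : ℝ) (v : V → ℝ), (normLap G).mulVec v = θ • v →
      Complex.exp (Complex.I * τ * θ) * (v a : ℂ) = γ * (v b : ℂ) :=
    fun θ v hv => pst_key (normLap G) hL τ γ a b hU θ v hv
  have hγ0 : γ ≠ 0 := by
    intro h; rw [h] at hγ; simp at hγ
  have hE1 : ∀ θ : ℝ, ‖Complex.exp (Complex.I * τ * θ)‖ = 1 := by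
    intro θ
    have : Complex.I * τ * θ = ((τ * θ : ℝ) : ℂ) * Complex.I := by push_cast; ring
    rw [this, Complex.norm_exp_ofReal_mul_I]
  have hE0 : ∀ θ : ℝ, Complex.exp (Complex.I * τ * θ) ≠ 0 := fun θ => Complex.exp_ne_zero _
  -- cross-multiplied strong cospectrality relation
  have hcross : ∀ (θ : ℝ) (v w : V → ℝ), (normLap G).mulVec v = θ • v →
      (normLap G).mulVec w = θ • w → w a * v b = v a * w b := by
    intro θ v w hv hw
    have h1 := hkey θ v hv
    have h2 := hkey θ w hw
    have h3 : Complex.exp (Complex.I * τ * θ) * ((v a : ℂ) * (w b : ℂ))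
        = Complex.exp (Complex.I * τ * θ) * ((w a : ℂ) * (v b : ℂ)) := by
      calc Complex.exp (Complex.I * τ * θ) * ((v a : ℂ) * (w b : ℂ))
          = (Complex.exp (Complex.I * τ * θ) * (v a : ℂ)) * (w b : ℂ) := by ring
        _ = (γ * (v b : ℂ)) * (w b : ℂ) := by rw [h1]
        _ = (γ * (w b : ℂ)) * (v b : ℂ) := by ring
        _ = (Complex.exp (Complex.I * τ * θ) * (w a : ℂ)) * (v b : ℂ) := by rw [h2]
        _ = Complex.exp (Complex.I * τ * θ) * ((w a : ℂ) * (v b : ℂ)) := by ring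
    have h4 : (v a : ℂ) * (w b : ℂ) = (w a : ℂ) * (v b : ℂ) :=
      mul_left_cancel₀ (hE0 θ) h3
    have : ((v a * w b : ℝ) : ℂ) = ((w a * v b : ℝ) : ℂ) := by push_cast; exact h4
    exact (Complex.ofReal_inj.1 this).symm
  -- |v a| = |v b| on eigenvectors
  have habs : ∀ (θ : ℝ) (v : V → ℝ), (normLap G).mulVec v = θ • v → |v a| = |v b| := by
    intro θ v hv
    have h1 := congrArg (fun z => ‖z‖) (hkey θ v hv)
    simp only [norm_mul, hE1 θ, hγ, one_mul, Complex.norm_real] at h1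
    exact h1
  -- eigenvector at a vanishing at b is impossible
  have hvb_ne : ∀ (θ : ℝ) (v : V → ℝ), (normLap G).mulVec v = θ • v → v a ≠ 0 → v b ≠ 0 := by
    intro θ v hv hva hvb0
    have h := habs θ v hv
    rw [hvb0, abs_zero] at h
    exact hva (abs_eq_zero.1 h)
  have hva_ne : ∀ (θ : ℝ) (v : V → ℝ), (normLap G).mulVec v = θ • v → v b ≠ 0 → v a ≠ 0 := by
    intro θ v hv hvb0 hva0
    have h := habs θ v hv
    rw [hva0, abs_zero] at h
    exact hvb0 (abs_eq_zero.1 h.symm)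
  -- support of a is contained in {0, 2}
  have hsupp : ∀ (θ : ℝ) (v : V → ℝ), (normLap G).mulVec v = θ • v → v a ≠ 0 →
      θ = 0 ∨ θ = 2 := by
    intro θ v hv hva
    by_contra hcon
    push_neg at hcon
    obtain ⟨hθ0, hθ2⟩ := hcon
    have hvb : v b ≠ 0 := hvb_ne θ v hv hva
    have hvne : v ≠ 0 := fun h0 => hva (by rw [h0]; rfl)
    have habs1 : |v a| = |v b| := habs θ v hv
    -- v a = v b or v a = - v b
    have hcase : v a = v b ∨ v a = -v b := abs_eq_abs.1 habs1
    rcases hcase with hc | hc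
    · -- positive case: pass to 2 - θ
      have hconj := conj_eigen G (normLap G) hmv σ hσadj v θ hv
      have hSm : Sminus (normLap G) a b (2 - θ) := by
        refine ⟨⟨σ * v, ?_, hconj, ?_⟩, ?_⟩
        · intro h0
          have := congrFun h0 a
          simp only [Pi.mul_apply, Pi.zero_apply, hσa, one_mul] at this
          exact hva this
        · simp only [Pi.mul_apply, hσa, one_mul]; exact hva
        · intro w hw
          have hcr := hcross (2 - θ) (σ * v) w hconj hw
          simp only [Pi.mul_apply, hσa, hσb, one_mul] at hcr
          rw [hc] at hcr
          have h5 : (w a + w b) * v b = 0 := by linear_combination -hcr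
          rcases mul_eq_zero.1 h5 with h6 | h6
          · linarith
          · exact absurd h6 hvb
      have := (hS (2 - θ)).1 hSm
      exact hθ0 (by linarith)
    · -- negative case : Sminus θ
      have hSm : Sminus (normLap G) a b θ := by
        refine ⟨⟨v, hvne, hv, hva⟩, ?_⟩
        intro w hw
        have hcr := hcross θ v w hv hw
        rw [hc] at hcr
        have h5 : (w a + w b) * v b = 0 := by linear_combination hcr
        rcases mul_eq_zero.1 h5 with h6 | h6
        · linarith
        · exact absurd h6 hvb
      exact hθ2 ((hS θ).1 hSm)
  have hsuppb : ∀ (θ : ℝ) (v : V → ℝ), (normLap G).mulVec v = θ • v → v b ≠ 0 →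
      θ = 0 ∨ θ = 2 := fun θ v hv hvb => hsupp θ v hv (hva_ne θ v hv hvb)
  -- spectral decomposition
  have hA : (normLap G).IsHermitian := normLap_isHermitian G
  set B := hA.eigenvectorBasis with hB
  set μ := hA.eigenvalues with hμ
  have hBeig : ∀ i, (normLap G).mulVec (B i) = μ i • (B i) := fun i =>
    hA.mulVec_eigenvectorBasis i
  have hdec : ∀ e : V, (∀ i, (B i : V → ℝ) e ≠ 0 → μ i = 0 ∨ μ i = 2) →
      ∃ c₁ c₂ : ℝ, ∀ x, (Pi.single e 1 : V → ℝ) x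
        = c₁ * Real.sqrt (G.degree x) + c₂ * (σ x * Real.sqrt (G.degree x)) := by
    intro e he
    have hsum : ∀ x, (Pi.single e 1 : V → ℝ) x = ∑ i, (B i : V → ℝ) e * (B i : V → ℝ) x := by
      intro x
      have h := B.sum_repr (EuclideanSpace.single e (1:ℝ))
      have h3 := congrArg
        (fun z : EuclideanSpace ℝ V => (inner ℝ (EuclideanSpace.single x (1:ℝ)) z : ℝ)) h
      simp only [inner_sum, real_inner_smul_right, EuclideanSpace.inner_single_left,
        EuclideanSpace.inner_single_right, B.repr_apply_apply, PiLp.smul_apply, smul_eq_mul,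
        EuclideanSpace.single_apply, starRingEnd_apply, star_trivial, one_mul, mul_one] at h3
      rw [Pi.single_apply, h3]
      by_cases hxe : x = e
      · subst hxe; simp
      · rw [if_neg hxe, if_neg (fun h' => hxe h'.symm)]
    set s0 : Finset V := Finset.univ.filter (fun i => μ i = 0) with hs0
    set s2 : Finset V := Finset.univ.filter (fun i => μ i = 2) with hs2
    set P : V → ℝ := fun x => ∑ i ∈ s0, (B i : V → ℝ) e * (B i : V → ℝ) x with hP
    set Q : V → ℝ := fun x => ∑ i ∈ s2, (B i : V → ℝ) e * (B i : V → ℝ) x with hQ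
    have hPQ : ∀ x, (Pi.single e 1 : V → ℝ) x = P x + Q x := by
      intro x
      rw [hsum x]
      rw [← Finset.sum_filter_add_sum_filter_not Finset.univ (fun i => μ i = 0)
        (fun i => (B i : V → ℝ) e * (B i : V → ℝ) x)]
      congr 1
      rw [← Finset.sum_filter_add_sum_filter_not (Finset.univ.filter (fun i => ¬ μ i = 0))
        (fun i => μ i = 2) (fun i => (B i : V → ℝ) e * (B i : V → ℝ) x)]
      have hz : ∑ i ∈ (Finset.univ.filter (fun i => ¬ μ i = 0)).filter (fun i => ¬ μ i = 2),
          (B i : V → ℝ) e * (B i : V → ℝ) x = 0 := by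
        refine Finset.sum_eq_zero fun i hi => ?_
        simp only [Finset.mem_filter] at hi
        have : (B i : V → ℝ) e = 0 := by
          by_contra hne
          rcases he i hne with h0 | h0
          · exact hi.1.2 h0
          · exact hi.2 h0
        rw [this, zero_mul]
      rw [hz, add_zero]
      rw [hQ, hs2]
      congr 1
      ext i
      simp only [Finset.mem_filter, Finset.mem_univ, true_and]
      constructor
      · rintro ⟨h1, h2⟩; exact h2
      · intro h2; refine ⟨?_, h2⟩; rw [h2]; norm_num
    -- P is in the kernel
    have hPfun : P = ∑ i ∈ s0, ((B i : V → ℝ) e) • (B i : V → ℝ) := by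
      funext x
      rw [hP]
      rw [Finset.sum_apply]
      simp only [PiLp.smul_apply, Pi.smul_apply, smul_eq_mul]
    have hQfun : Q = ∑ i ∈ s2, ((B i : V → ℝ) e) • (B i : V → ℝ) := by
      funext x
      rw [hQ]
      rw [Finset.sum_apply]
      simp only [PiLp.smul_apply, Pi.smul_apply, smul_eq_mul]
    have hP0 : (normLap G).mulVec P = 0 := by
      rw [hPfun]
      rw [show (normLap G).mulVec (∑ i ∈ s0, ((B i : V → ℝ) e) • (B i : V → ℝ))
          = ∑ i ∈ s0, (normLap G).mulVec (((B i : V → ℝ) e) • (B i : V → ℝ)) from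
        map_sum (normLap G).mulVecLin _ _]
      refine Finset.sum_eq_zero fun i hi => ?_
      rw [Matrix.mulVec_smul, hBeig i]
      have : μ i = 0 := by
        simp only [hs0, Finset.mem_filter] at hi
        exact hi.2
      rw [this]
      simp
    have hQ2 : (normLap G).mulVec Q = (2:ℝ) • Q := by
      rw [hQfun]
      rw [show (normLap G).mulVec (∑ i ∈ s2, ((B i : V → ℝ) e) • (B i : V → ℝ))
          = ∑ i ∈ s2, (normLap G).mulVec (((B i : V → ℝ) e) • (B i : V → ℝ)) from
        map_sum (normLap G).mulVecLin _ _]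
      rw [Finset.smul_sum]
      refine Finset.sum_congr rfl fun i hi => ?_
      rw [Matrix.mulVec_smul, hBeig i]
      have : μ i = 2 := by
        simp only [hs2, Finset.mem_filter] at hi
        exact hi.2
      rw [this, smul_comm]
    obtain ⟨c₁, hc₁⟩ := normLap_ker G hdeg hconn P hP0
    have hσQ : (normLap G).mulVec (σ * Q) = 0 := by
      have := conj_eigen G (normLap G) hmv σ hσadj Q 2 hQ2
      rw [this]
      norm_num
    obtain ⟨c₂, hc₂⟩ := normLap_ker G hdeg hconn (σ * Q) hσQ
    refine ⟨c₁, c₂, fun x => ?_⟩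
    have hQx : Q x = c₂ * (σ x * Real.sqrt (G.degree x)) := by
      have h1 := hc₂ x
      simp only [Pi.mul_apply] at h1
      have := congrArg (fun t => σ x * t) h1
      rw [← mul_assoc, hσsq x, one_mul] at this
      rw [this]; ring
    rw [hPQ x, hc₁ x, hQx]
  -- apply to a and b
  obtain ⟨c₁, c₂, hea⟩ := hdec a (fun i hi => hsupp (μ i) (B i) (hBeig i) hi)
  obtain ⟨d₁, d₂, heb⟩ := hdec b (fun i hi => hsuppb (μ i) (B i) (hBeig i) hi)
  have hnota : ∀ x, x ≠ a → σ x ≠ σ a := by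
    intro x hx hcontra
    have h1 := hea x
    rw [Pi.single_eq_of_ne hx, hcontra] at h1
    have h2 := hea a
    rw [Pi.single_eq_same] at h2
    have hfac : (0:ℝ) = (c₁ + c₂ * σ a) * Real.sqrt (G.degree x) := by rw [h1]; ring
    have hca : c₁ + c₂ * σ a = 0 := by
      rcases mul_eq_zero.1 hfac.symm with h | h
      · exact h
      · exact absurd h (hs x).ne'
    have : (1:ℝ) = (c₁ + c₂ * σ a) * Real.sqrt (G.degree a) := by rw [h2]; ring
    rw [hca, zero_mul] at this
    norm_num at this
  have hnotb : ∀ x, x ≠ b → σ x ≠ σ b := by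
    intro x hx hcontra
    have h1 := heb x
    rw [Pi.single_eq_of_ne hx, hcontra] at h1
    have h2 := heb b
    rw [Pi.single_eq_same] at h2
    have hfac : (0:ℝ) = (d₁ + d₂ * σ b) * Real.sqrt (G.degree x) := by rw [h1]; ring
    have hca : d₁ + d₂ * σ b = 0 := by
      rcases mul_eq_zero.1 hfac.symm with h | h
      · exact h
      · exact absurd h (hs x).ne'
    have : (1:ℝ) = (d₁ + d₂ * σ b) * Real.sqrt (G.degree b) := by rw [h2]; ring
    rw [hca, zero_mul] at this
    norm_num at this
  have hall : ∀ x : V, x = a ∨ x = b := by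
    intro x
    by_contra h
    push_neg at h
    have h1 := hnota x h.1
    have h2 := hnotb x h.2
    rw [hσa] at h1
    rw [hσb] at h2
    rcases hσval x with h3 | h3
    · exact h1 h3
    · exact h2 h3
  constructor
  · have hsub : (Finset.univ : Finset V) ⊆ {a, b} := by
      intro x _
      rcases hall x with h | h <;> simp [h]
    have h2 : Fintype.card V ≤ 2 := by
      calc Fintype.card V = (Finset.univ : Finset V).card := (Finset.card_univ).symm
        _ ≤ ({a, b} : Finset V).card := Finset.card_le_card hsub
        _ = 2 := Finset.card_pair hab
    omega
  · obtain ⟨w⟩ := hconn.preconnected a b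
    cases w with
    | nil => exact absurd rfl hab
    | @cons _ u _ h p =>
      rcases hall u with hu | hu
      · subst hu; exact absurd rfl h.ne
      · subst hu; exact h
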